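/- Suppose the inequality ‖T_0f‖_{L^{q_0}} ≤ A‖f‖_{L^{p_0}} holds with p_0 = (d+1)/d, q_0 = d+1, and the pointwise bounds T(υ_*) ≤ C υ^{1/d} hold. Then for every t ∈ [0,1] and every nonnegative f, (∫ (Tf)^{q_t} υ^{-t q_t/d})^{1/q_t} ≤ C' (∫ f^{p_t} υ_*^{-t p_t})^{1/p_t}, where p_t^{-1} = (1-t)/p_0 and q_t^{-1} = (1-t)/q_0, with C' independent of t. -/

import Mathlib

open MeasureTheory

/-- Points of ℝ^d written as `(x', x_d) ∈ ℝ^{d-1} × ℝ`. -/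
abbrev Pt (d : ℕ) := EuclideanSpace ℝ (Fin (d - 1)) × ℝ

/-- `Tf(x) = ∫_{ℝ^{d-1}} f(x'-t, x_d - |t|²) dt`. -/
noncomputable def Tconv (d : ℕ) (f : Pt d → ℝ) (x : Pt d) : ℝ :=
  ∫ t : EuclideanSpace ℝ (Fin (d - 1)), f (x.1 - t, x.2 - ‖t‖ ^ 2)

/-- `T` on nonnegative measurable functions (lower integral version). -/
noncomputable def Tlin (d : ℕ) (f : Pt d → ENNReal) (x : Pt d) : ENNReal :=
  ∫⁻ t : EuclideanSpace ℝ (Fin (d - 1)), f (x.1 - t, x.2 - ‖t‖ ^ 2)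

/-- `υ(x) = min(1, |x'|^{-d}, |x_d - |x'|²|^{-d}) = (max(1, |x'|^d, |x_d - |x'|²|^d))⁻¹`. -/
noncomputable def upsR (d : ℕ) (x : Pt d) : ℝ :=
  (max 1 (max (‖x.1‖ ^ d) (|x.2 - ‖x.1‖ ^ 2| ^ d)))⁻¹

/-- `υ_*(x) = min(1, |x'|^{-d}, |x_d + |x'|²|^{-d}) = (max(1, |x'|^d, |x_d + |x'|²|^d))⁻¹`. -/
noncomputable def upsStarR (d : ℕ) (x : Pt d) : ℝ :=
  (max 1 (max (‖x.1‖ ^ d) (|x.2 + ‖x.1‖ ^ 2| ^ d)))⁻¹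

/-- The exponent `p_t` with `p_t⁻¹ = (1-t)/p_0`, `p_0 = (d+1)/d`; `∞` when `t = 1`. -/
noncomputable def pexp (d : ℕ) (t : ℝ) : ENNReal :=
  ENNReal.ofReal ((d : ℝ) + 1) / ENNReal.ofReal ((d : ℝ) * (1 - t))

/-- The exponent `q_t` with `q_t⁻¹ = (1-t)/q_0`, `q_0 = d+1`; `∞` when `t = 1`. -/
noncomputable def qexp (d : ℕ) (t : ℝ) : ENNReal :=
  ENNReal.ofReal ((d : ℝ) + 1) / ENNReal.ofReal (1 - t)

section Aux

open Filter Set ENNReal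

instance (d : ℕ) : (volume : Measure (Pt d)).IsAddRightInvariant := by
  rw [Measure.volume_eq_prod]; infer_instance

/-- Null sets pull back to null sets along the slices of the convolution map. -/
lemma slice_ae (d : ℕ) {α : Type*} {g g' : Pt d → α}
    (h : ∀ᵐ y ∂(volume : Measure (Pt d)), g y = g' y) :
    ∀ᵐ x : Pt d, ∀ᵐ τ : EuclideanSpace ℝ (Fin (d - 1)),
      g (x.1 - τ, x.2 - ‖τ‖ ^ 2) = g' (x.1 - τ, x.2 - ‖τ‖ ^ 2) := by
  set E := EuclideanSpace ℝ (Fin (d - 1))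
  have hN : volume {y : Pt d | g y ≠ g' y} = 0 := by
    simpa [ae_iff] using h
  obtain ⟨N, hsub, hmeas, hN0⟩ := exists_measurable_superset_of_null hN
  have hΦ : Measurable fun p : E × Pt d => p.2 - (p.1, ‖p.1‖ ^ 2) :=
    measurable_snd.sub ((measurable_fst).prodMk ((measurable_fst.norm).pow measurable_const))
  set S : Set (E × Pt d) := (fun p : E × Pt d => p.2 - (p.1, ‖p.1‖ ^ 2)) ⁻¹' N with hS
  have hSm : MeasurableSet S := hΦ hmeas
  have hS0 : (volume.prod volume) S = 0 := by
    rw [Measure.measure_prod_null hSm]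
    refine Filter.Eventually.of_forall fun τ => ?_
    show volume (Prod.mk τ ⁻¹' S) = 0
    have : (Prod.mk τ ⁻¹' S) = (fun x : Pt d => x - (τ, ‖τ‖ ^ 2)) ⁻¹' N := rfl
    rw [this,
      (measurePreserving_sub_right volume (τ, ‖τ‖ ^ 2)).measure_preimage hmeas.nullMeasurableSet]
    exact hN0
  have hswapm : MeasurableSet (Prod.swap ⁻¹' S : Set (Pt d × E)) := measurable_swap hSm
  have hS'0 : (volume.prod volume) (Prod.swap ⁻¹' S : Set (Pt d × E)) = 0 := by
    have hsw := Measure.prod_swap (μ := (volume : Measure E)) (ν := (volume : Measure (Pt d)))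
    calc (volume.prod volume) (Prod.swap ⁻¹' S : Set (Pt d × E))
        = ((volume : Measure E).prod volume).map Prod.swap (Prod.swap ⁻¹' S) := by rw [hsw]
      _ = (volume.prod volume) (Prod.swap ⁻¹' (Prod.swap ⁻¹' S) : Set (E × Pt d)) := by
          rw [Measure.map_apply measurable_swap hswapm]
      _ = (volume.prod volume) S := by simp [Set.preimage_preimage]
      _ = 0 := hS0
  have hae := Measure.measure_ae_null_of_prod_null hS'0
  filter_upwards [hae] with x hx
  have hx0 : volume {τ : E | (x.1 - τ, x.2 - ‖τ‖ ^ 2) ∈ N} = 0 := hx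
  have h2 : volume {τ : E | g (x.1 - τ, x.2 - ‖τ‖ ^ 2) ≠ g' (x.1 - τ, x.2 - ‖τ‖ ^ 2)} = 0 := by
    refine measure_mono_null (fun τ hτ => hsub hτ) hx0
  simpa [ae_iff] using h2

lemma denom_pos (a b : ℝ) : (0 : ℝ) < max 1 (max a b) :=
  lt_of_lt_of_le one_pos (le_max_left _ _)

lemma upsR_pos (d : ℕ) (x : Pt d) : 0 < upsR d x := inv_pos.2 (denom_pos _ _)

lemma upsStarR_pos (d : ℕ) (x : Pt d) : 0 < upsStarR d x := inv_pos.2 (denom_pos _ _)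

lemma cont_upsStarR (d : ℕ) : Continuous (upsStarR d) := by
  have h1 : Continuous fun x : Pt d => ‖x.1‖ ^ d := (continuous_fst.norm).pow d
  have h2 : Continuous fun x : Pt d => |x.2 + ‖x.1‖ ^ 2| ^ d :=
    ((continuous_snd.add ((continuous_fst.norm).pow 2)).abs).pow d
  exact (continuous_const.max (h1.max h2)).inv₀ fun x => (denom_pos _ _).ne'

lemma cont_upsR (d : ℕ) : Continuous (upsR d) := by
  have h1 : Continuous fun x : Pt d => ‖x.1‖ ^ d := (continuous_fst.norm).pow d
  have h2 : Continuous fun x : Pt d => |x.2 - ‖x.1‖ ^ 2| ^ d :=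
    ((continuous_snd.sub ((continuous_fst.norm).pow 2)).abs).pow d
  exact (continuous_const.max (h1.max h2)).inv₀ fun x => (denom_pos _ _).ne'

lemma meas_slice_fun (d : ℕ) (x : Pt d) :
    Measurable fun τ : EuclideanSpace ℝ (Fin (d - 1)) =>
      ((x.1 - τ, x.2 - ‖τ‖ ^ 2) : Pt d) :=
  (measurable_const.sub measurable_id).prodMk
    (measurable_const.sub ((measurable_norm).pow measurable_const))

lemma meas_uncurry (d : ℕ) :
    Measurable fun p : Pt d × EuclideanSpace ℝ (Fin (d - 1)) =>
      ((p.1.1 - p.2, p.1.2 - ‖p.2‖ ^ 2) : Pt d) :=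
  (measurable_fst.fst.sub measurable_snd).prodMk
    (measurable_fst.snd.sub ((measurable_snd.norm).pow measurable_const))

lemma meas_Tlin (d : ℕ) {g : Pt d → ℝ≥0∞} (hg : Measurable g) : Measurable (Tlin d g) := by
  have : Measurable (Function.uncurry fun (x : Pt d)
      (τ : EuclideanSpace ℝ (Fin (d - 1))) => g (x.1 - τ, x.2 - ‖τ‖ ^ 2)) :=
    hg.comp (meas_uncurry d)
  exact Measurable.lintegral_prod_right this

lemma tconv_eq (d : ℕ) {f : Pt d → ℝ} (hf : Measurable f) (hnn : ∀ y, 0 ≤ f y) (x : Pt d) :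
    Tconv d f x = (Tlin d (fun y => ENNReal.ofReal (f y)) x).toReal := by
  rw [Tconv, Tlin, integral_eq_lintegral_of_nonneg_ae
    (Filter.Eventually.of_forall fun τ => hnn _)
    (hf.comp (meas_slice_fun d x)).aestronglyMeasurable]

lemma ofReal_tconv_le (d : ℕ) {f : Pt d → ℝ} (hf : Measurable f) (hnn : ∀ y, 0 ≤ f y)
    (x : Pt d) :
    ENNReal.ofReal (Tconv d f x) ≤ Tlin d (fun y => ENNReal.ofReal (f y)) x := by
  rw [tconv_eq d hf hnn x]; exact ENNReal.ofReal_toReal_le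

lemma tconv_nonneg (d : ℕ) {f : Pt d → ℝ} (hf : Measurable f) (hnn : ∀ y, 0 ≤ f y) (x : Pt d) :
    0 ≤ Tconv d f x := by
  rw [tconv_eq d hf hnn x]; exact ENNReal.toReal_nonneg

lemma eLp_ofReal {α : Type*} [MeasurableSpace α] (μ : Measure α) (f : α → ℝ) {r : ℝ}
    (hr : 0 < r) :
    eLpNorm f (ENNReal.ofReal r) μ = (∫⁻ x, (ENNReal.ofReal |f x|) ^ r ∂μ) ^ (1 / r) := by
  rw [eLpNorm_eq_lintegral_rpow_enorm_toReal (by simp [ENNReal.ofReal_eq_zero]; linarith)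
    ENNReal.ofReal_ne_top, ENNReal.toReal_ofReal hr.le]
  congr 1
  exact lintegral_congr fun x => by rw [Real.enorm_eq_ofReal_abs]

lemma qexp_eq (d : ℕ) {t : ℝ} (ht : t < 1) :
    qexp d t = ENNReal.ofReal (((d : ℝ) + 1) / (1 - t)) := by
  rw [qexp, ENNReal.ofReal_div_of_pos (by linarith)]

lemma pexp_eq (d : ℕ) (hd : 2 ≤ d) {t : ℝ} (ht : t < 1) :
    pexp d t = ENNReal.ofReal (((d : ℝ) + 1) / ((d : ℝ) * (1 - t))) := by
  have hd0 : (0 : ℝ) < d := by exact_mod_cast (by omega : 0 < d)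
  rw [pexp, ENNReal.ofReal_div_of_pos (by nlinarith)]

lemma iSup_rpow {c : ℝ} (hc : 0 < c) (g : ℕ → ℝ≥0∞) : (⨆ n, g n) ^ c = ⨆ n, g n ^ c :=
  Monotone.map_iSup_of_continuousAt (f := fun x : ℝ≥0∞ => x ^ c)
    (ENNReal.continuous_rpow_const.continuousAt) (ENNReal.monotone_rpow_of_nonneg hc.le)
    (by simpa using ENNReal.zero_rpow_of_pos hc)

end Aux
section LemA

open Filter Set ENNReal

/-- The strong (lintegral) form of the unweighted `L^{p_0} → L^{q_0}` bound, obtained from the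
Bochner-integral form by monotone truncation. -/
lemma lemA (d : ℕ) (hd : 2 ≤ d) (A : ENNReal)
    (hA : ∀ f : Pt d → ℝ,
      eLpNorm (Tconv d f) (qexp d 0) volume ≤ A * eLpNorm f (pexp d 0) volume)
    {h : Pt d → ℝ} (hm : Measurable h) (hnn : ∀ x, 0 ≤ h x) :
    (∫⁻ x, (Tlin d (fun y => ENNReal.ofReal (h y)) x) ^ ((d : ℝ) + 1)) ^ (1 / ((d : ℝ) + 1)) ≤
      A * (∫⁻ x, (ENNReal.ofReal (h x)) ^ (((d : ℝ) + 1) / d)) ^ ((d : ℝ) / ((d : ℝ) + 1)) := by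
  have hd0 : (0 : ℝ) < d := by exact_mod_cast (by omega : 0 < d)
  set q0r : ℝ := (d : ℝ) + 1 with hq0r
  set p0r : ℝ := ((d : ℝ) + 1) / d with hp0r
  have hq0pos : 0 < q0r := by positivity
  have hp0pos : 0 < p0r := by positivity
  have hq0e : qexp d 0 = ENNReal.ofReal q0r := by
    rw [qexp_eq d (by norm_num)]; norm_num <;> rfl
  have hp0e : pexp d 0 = ENNReal.ofReal p0r := by
    rw [pexp_eq d hd (by norm_num)]; norm_num <;> rfl
  -- truncations
  set hn : ℕ → Pt d → ℝ := fun n y => if ‖y‖ ≤ n then min (h y) n else 0 with hhn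
  have hn_meas : ∀ n, Measurable (hn n) := by
    intro n
    exact Measurable.ite (measurableSet_le measurable_norm measurable_const)
      (hm.min measurable_const) measurable_const
  have hn_nn : ∀ n y, 0 ≤ hn n y := by
    intro n y
    simp only [hhn]
    split
    · exact le_min (hnn y) (by positivity)
    · exact le_rfl
  have hn_le : ∀ n y, hn n y ≤ h y := by
    intro n y
    simp only [hhn]
    split
    · exact min_le_left _ _
    · exact hnn y
  have hn_mono : ∀ y, Monotone fun n => hn n y := by
    intro y n m hnm
    simp only [hhn]
    by_cases h1 : ‖y‖ ≤ (n : ℝ)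
    · have h2 : ‖y‖ ≤ (m : ℝ) := le_trans h1 (by exact_mod_cast hnm)
      rw [if_pos h1, if_pos h2]
      exact min_le_min le_rfl (by exact_mod_cast hnm)
    · rw [if_neg h1]
      by_cases h2 : ‖y‖ ≤ (m : ℝ)
      · rw [if_pos h2]
        exact le_min (hnn y) (Nat.cast_nonneg m)
      · rw [if_neg h2]
  have hn_sup : ∀ y, (⨆ n, ENNReal.ofReal (hn n y)) = ENNReal.ofReal (h y) := by
    intro y
    apply le_antisymm
    · exact iSup_le fun n => ENNReal.ofReal_le_ofReal (hn_le n y)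
    · set n := ⌈max ‖y‖ (h y)⌉₊ with hn'
      have h1 : ‖y‖ ≤ n := le_trans (le_max_left _ _) (Nat.le_ceil _)
      have h2 : h y ≤ n := le_trans (le_max_right _ _) (Nat.le_ceil _)
      have : hn n y = h y := by
        simp only [hhn]; rw [if_pos h1, min_eq_left h2]
      rw [← this]
      exact le_iSup (fun n => ENNReal.ofReal (hn n y)) n
  -- finiteness of the truncated transforms
  have hfin : ∀ n x, Tlin d (fun y => ENNReal.ofReal (hn n y)) x < ⊤ := by
    intro n x
    have hb : ∀ τ : EuclideanSpace ℝ (Fin (d - 1)),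
        ENNReal.ofReal (hn n (x.1 - τ, x.2 - ‖τ‖ ^ 2)) ≤
          (Metric.closedBall x.1 (n : ℝ)).indicator (fun _ => ENNReal.ofReal n) τ := by
      intro τ
      by_cases hτ : τ ∈ Metric.closedBall x.1 (n : ℝ)
      · rw [Set.indicator_of_mem hτ]
        refine ENNReal.ofReal_le_ofReal ?_
        simp only [hhn]
        split
        · exact min_le_right _ _
        · exact Nat.cast_nonneg n
      · rw [Set.indicator_of_notMem hτ]
        have hτ' : (n : ℝ) < ‖x.1 - τ‖ := by
          have h3 := Metric.mem_closedBall.not.1 hτ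
          push_neg at h3
          rwa [dist_eq_norm, norm_sub_rev] at h3
        have : ¬ (‖((x.1 - τ, x.2 - ‖τ‖ ^ 2) : Pt d)‖ ≤ n) := by
          intro hcon
          exact absurd (le_trans (norm_fst_le _) hcon) (not_le.2 hτ')
        simp only [hhn, if_neg this, ENNReal.ofReal_zero, le_refl]
    calc Tlin d (fun y => ENNReal.ofReal (hn n y)) x
        ≤ ∫⁻ τ, (Metric.closedBall x.1 (n : ℝ)).indicator (fun _ => ENNReal.ofReal n) τ :=
          lintegral_mono hb
      _ = ENNReal.ofReal n * volume (Metric.closedBall x.1 (n : ℝ)) := by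
          rw [lintegral_indicator_const measurableSet_closedBall]
      _ < ⊤ := ENNReal.mul_lt_top ENNReal.ofReal_lt_top measure_closedBall_lt_top
  -- the bound for the truncations
  have key : ∀ n, (∫⁻ x, (Tlin d (fun y => ENNReal.ofReal (hn n y)) x) ^ q0r) ^ (1 / q0r) ≤
      A * (∫⁻ x, (ENNReal.ofReal (h x)) ^ p0r) ^ (1 / p0r) := by
    intro n
    have := hA (hn n)
    rw [hq0e, hp0e, eLp_ofReal volume _ hq0pos, eLp_ofReal volume _ hp0pos] at this
    have hl : (∫⁻ x, (ENNReal.ofReal |Tconv d (hn n) x|) ^ q0r) ^ (1 / q0r) =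
        (∫⁻ x, (Tlin d (fun y => ENNReal.ofReal (hn n y)) x) ^ q0r) ^ (1 / q0r) := by
      congr 1
      refine lintegral_congr fun x => ?_
      rw [abs_of_nonneg (tconv_nonneg d (hn_meas n) (hn_nn n) x), tconv_eq d (hn_meas n)
        (hn_nn n) x, ENNReal.ofReal_toReal (hfin n x).ne]
    rw [hl] at this
    refine le_trans this (mul_le_mul_right ?_ A)
    refine ENNReal.rpow_le_rpow ?_ (by positivity)
    refine lintegral_mono fun x => ?_
    refine ENNReal.rpow_le_rpow ?_ hp0pos.le
    rw [abs_of_nonneg (hn_nn n x)]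
    exact ENNReal.ofReal_le_ofReal (hn_le n x)
  -- monotone convergence
  have hTlin_sup : ∀ x, Tlin d (fun y => ENNReal.ofReal (h y)) x =
      ⨆ n, Tlin d (fun y => ENNReal.ofReal (hn n y)) x := by
    intro x
    calc Tlin d (fun y => ENNReal.ofReal (h y)) x
        = ∫⁻ τ : EuclideanSpace ℝ (Fin (d - 1)),
            ⨆ n, ENNReal.ofReal (hn n (x.1 - τ, x.2 - ‖τ‖ ^ 2)) :=
          lintegral_congr fun τ => (hn_sup _).symm
      _ = ⨆ n, ∫⁻ τ : EuclideanSpace ℝ (Fin (d - 1)),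
            ENNReal.ofReal (hn n (x.1 - τ, x.2 - ‖τ‖ ^ 2)) :=
          lintegral_iSup
            (fun n => ((hn_meas n).ennreal_ofReal).comp (meas_slice_fun d x))
            (fun n m hnm τ => ENNReal.ofReal_le_ofReal (hn_mono _ hnm))
      _ = ⨆ n, Tlin d (fun y => ENNReal.ofReal (hn n y)) x := rfl
  have hMCT : (∫⁻ x, (Tlin d (fun y => ENNReal.ofReal (h y)) x) ^ q0r) =
      ⨆ n, ∫⁻ x, (Tlin d (fun y => ENNReal.ofReal (hn n y)) x) ^ q0r := by
    rw [← lintegral_iSup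
      (fun n => (meas_Tlin d (Measurable.ennreal_ofReal (hn_meas n))).pow measurable_const)
      (fun n m hnm => fun x => ENNReal.rpow_le_rpow
        (lintegral_mono fun τ => ENNReal.ofReal_le_ofReal (hn_mono _ hnm)) hq0pos.le)]
    refine lintegral_congr fun x => ?_
    rw [hTlin_sup x, iSup_rpow hq0pos]
  -- conclude
  have hfinal : (∫⁻ x, (Tlin d (fun y => ENNReal.ofReal (h y)) x) ^ q0r) ≤
      (A * (∫⁻ x, (ENNReal.ofReal (h x)) ^ p0r) ^ (1 / p0r)) ^ q0r := by
    rw [hMCT]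
    refine iSup_le fun n => ?_
    have := ENNReal.rpow_le_rpow (key n) hq0pos.le
    rwa [← ENNReal.rpow_mul, one_div, inv_mul_cancel₀ hq0pos.ne', ENNReal.rpow_one] at this
  have := ENNReal.rpow_le_rpow hfinal (by positivity : (0:ℝ) ≤ 1 / q0r)
  rwa [← ENNReal.rpow_mul, mul_one_div, div_self hq0pos.ne', ENNReal.rpow_one,
    one_div_div] at this

end LemA
section Main

open Filter Set ENNReal

lemma mul_weight_cancel {a b : ℝ} (ha : 0 ≤ a) (hb : 0 < b) (t : ℝ) :
    ENNReal.ofReal (a * b ^ (-t)) * (ENNReal.ofReal b) ^ t = ENNReal.ofReal a := by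
  have hb0 : ENNReal.ofReal b ≠ 0 := (ENNReal.ofReal_pos.2 hb).ne'
  have hbt : ENNReal.ofReal b ≠ ⊤ := ENNReal.ofReal_ne_top
  rw [ENNReal.ofReal_mul ha, ← ENNReal.ofReal_rpow_of_pos hb, mul_assoc,
    ← ENNReal.rpow_add (-t) t hb0 hbt, neg_add_cancel, ENNReal.rpow_zero, mul_one]

/-- Weighted inequalities for `T` by complex interpolation: assuming the unweighted
`L^{p_0} → L^{q_0}` bound and the pointwise bound `T(υ_*) ≤ C υ^{1/d}`, for every
`t ∈ [0,1]` and every nonnegative `f`,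
`(∫ (Tf)^{q_t} υ^{-t q_t/d})^{1/q_t} ≤ C' (∫ f^{p_t} υ_*^{-t p_t})^{1/p_t}`,
with `C'` independent of `t`. -/
theorem weighted_inequalities_for_T (d : ℕ) (hd : 2 ≤ d)
    (A : ENNReal) (hA' : A < ⊤)
    (hA : ∀ f : Pt d → ℝ,
      eLpNorm (Tconv d f) (qexp d 0) volume ≤ A * eLpNorm f (pexp d 0) volume)
    (C : ℝ)
    (hpt : ∀ x : Pt d, Tlin d (fun y => ENNReal.ofReal (upsStarR d y)) x ≤
      ENNReal.ofReal (C * (upsR d x) ^ ((1 : ℝ) / d))) :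
    ∃ C' : ENNReal, C' < ⊤ ∧ ∀ t ∈ Set.Icc (0 : ℝ) 1, ∀ f : Pt d → ℝ,
      Measurable f → (∀ x, 0 ≤ f x) →
      eLpNorm (fun x => Tconv d f x * (upsR d x) ^ (-(t / d))) (qexp d t) volume ≤
        C' * eLpNorm (fun x => f x * (upsStarR d x) ^ (-t)) (pexp d t) volume := by
  have hd0 : (0 : ℝ) < d := by exact_mod_cast (by omega : 0 < d)
  set cB := ENNReal.ofReal (max C 1) with hcB
  have hcB1 : 1 ≤ cB := by
    rw [hcB, ENNReal.one_le_ofReal]; exact le_max_right _ _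
  have hcBtop : cB ≠ ⊤ := ENNReal.ofReal_ne_top
  set A' := A + 1 with hA'def
  have hA'1 : 1 ≤ A' := by
    rw [hA'def]; exact le_add_self
  have hA'top : A' ≠ ⊤ := by
    rw [hA'def]; exact ENNReal.add_ne_top.2 ⟨hA'.ne, ENNReal.one_ne_top⟩
  have hA2 : ∀ f : Pt d → ℝ,
      eLpNorm (Tconv d f) (qexp d 0) volume ≤ A' * eLpNorm f (pexp d 0) volume := by
    intro f
    exact (hA f).trans (mul_le_mul_left (by rw [hA'def]; exact le_self_add) _)
  have hpt' : ∀ x, Tlin d (fun y => ENNReal.ofReal (upsStarR d y)) x ≤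
      cB * (ENNReal.ofReal (upsR d x)) ^ ((1 : ℝ) / d) := by
    intro x
    refine (hpt x).trans ?_
    rw [hcB, ENNReal.ofReal_rpow_of_pos (upsR_pos d x),
      ← ENNReal.ofReal_mul (le_trans zero_le_one (le_max_right C 1))]
    exact ENNReal.ofReal_le_ofReal
      (mul_le_mul_of_nonneg_right (le_max_left C 1) (Real.rpow_nonneg (upsR_pos d x).le _))
  refine ⟨A' * cB, ENNReal.mul_lt_top (lt_top_iff_ne_top.2 hA'top) ENNReal.ofReal_lt_top, ?_⟩
  rintro t ⟨ht0, ht1⟩ f hfm hfnn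
  by_cases ht1' : t = 1
  · -- the endpoint `t = 1`
    subst ht1'
    have hq1 : qexp d 1 = ⊤ := by
      rw [qexp, sub_self, ENNReal.ofReal_zero, ENNReal.div_zero (by
        rw [Ne, ENNReal.ofReal_eq_zero, not_le]; positivity)]
    have hp1 : pexp d 1 = ⊤ := by
      rw [pexp, sub_self, mul_zero, ENNReal.ofReal_zero, ENNReal.div_zero (by
        rw [Ne, ENNReal.ofReal_eq_zero, not_le]; positivity)]
    set M := eLpNorm (fun x => f x * upsStarR d x ^ (-(1 : ℝ))) (pexp d 1) volume with hM
    by_cases hMtop : M = ⊤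
    · rw [hMtop, ENNReal.mul_top (by
        refine (lt_of_lt_of_le zero_lt_one ?_).ne'
        calc (1 : ℝ≥0∞) = 1 * 1 := (one_mul 1).symm
          _ ≤ A' * cB := mul_le_mul' hA'1 hcB1)]
      exact le_top
    · -- `M` finite: a.e. bound `f ≤ M.toReal • υ_*`
      have haeb : ∀ᵐ y ∂(volume : Measure (Pt d)), f y ≤ M.toReal * upsStarR d y := by
        have h1 : ∀ᵐ y ∂(volume : Measure (Pt d)),
            (‖f y * upsStarR d y ^ (-(1 : ℝ))‖₊ : ℝ≥0∞) ≤ M := by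
          rw [hM, hp1, eLpNorm_exponent_top]
          exact ae_le_eLpNormEssSup
        filter_upwards [h1] with y hy
        have hb := upsStarR_pos d y
        rw [← enorm_eq_nnnorm, Real.enorm_eq_ofReal_abs] at hy
        have h2 : |f y * upsStarR d y ^ (-(1 : ℝ))| ≤ M.toReal := by
          have := ENNReal.toReal_mono hMtop hy
          rwa [ENNReal.toReal_ofReal (abs_nonneg _)] at this
        rw [abs_of_nonneg (mul_nonneg (hfnn y) (Real.rpow_nonneg hb.le _)),
          Real.rpow_neg_one] at h2
        calc f y = f y * (upsStarR d y)⁻¹ * upsStarR d y := by field_simp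
          _ ≤ M.toReal * upsStarR d y := mul_le_mul_of_nonneg_right h2 hb.le
      set g : Pt d → ℝ := fun y => min (f y) (M.toReal * upsStarR d y) with hgdef
      have hgm : Measurable g := hfm.min (measurable_const.mul (cont_upsStarR d).measurable)
      have hgnn : ∀ y, 0 ≤ g y := fun y =>
        le_min (hfnn y) (mul_nonneg ENNReal.toReal_nonneg (upsStarR_pos d y).le)
      have hgf : ∀ᵐ y ∂(volume : Measure (Pt d)), f y = g y := by
        filter_upwards [haeb] with y hy
        rw [hgdef]; exact (min_eq_left hy).symm
      have hgW : ∀ y, ENNReal.ofReal (g y) ≤ M * ENNReal.ofReal (upsStarR d y) := by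
        intro y
        calc ENNReal.ofReal (g y) ≤ ENNReal.ofReal (M.toReal * upsStarR d y) :=
            ENNReal.ofReal_le_ofReal (min_le_right _ _)
          _ = ENNReal.ofReal M.toReal * ENNReal.ofReal (upsStarR d y) :=
            ENNReal.ofReal_mul ENNReal.toReal_nonneg
          _ = M * ENNReal.ofReal (upsStarR d y) := by rw [ENNReal.ofReal_toReal hMtop]
      have hTg : ∀ x, Tlin d (fun y => ENNReal.ofReal (g y)) x ≤
          M * cB * (ENNReal.ofReal (upsR d x)) ^ ((1 : ℝ) / d) := by
        intro x
        calc Tlin d (fun y => ENNReal.ofReal (g y)) x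
            ≤ ∫⁻ τ : EuclideanSpace ℝ (Fin (d - 1)),
                M * ENNReal.ofReal (upsStarR d (x.1 - τ, x.2 - ‖τ‖ ^ 2)) :=
              lintegral_mono fun τ => hgW _
          _ = M * Tlin d (fun y => ENNReal.ofReal (upsStarR d y)) x :=
              lintegral_const_mul' _ _ hMtop
          _ ≤ M * (cB * (ENNReal.ofReal (upsR d x)) ^ ((1 : ℝ) / d)) :=
              mul_le_mul_right (hpt' x) M
          _ = M * cB * (ENNReal.ofReal (upsR d x)) ^ ((1 : ℝ) / d) := (mul_assoc _ _ _).symm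
      have hslice := slice_ae d hgf
      rw [hq1, eLpNorm_exponent_top]
      have hbound : ∀ᵐ x ∂(volume : Measure (Pt d)),
          (‖Tconv d f x * upsR d x ^ (-(1 / (d : ℝ)))‖₊ : ℝ≥0∞) ≤ cB * M := by
        filter_upwards [hslice] with x hx
        have hups := upsR_pos d x
        have hofn0 : ENNReal.ofReal (upsR d x) ≠ 0 := (ENNReal.ofReal_pos.2 hups).ne'
        have hofnt : ENNReal.ofReal (upsR d x) ≠ ⊤ := ENNReal.ofReal_ne_top
        have hTT : Tconv d f x = Tconv d g x := integral_congr_ae hx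
        rw [← enorm_eq_nnnorm, Real.enorm_eq_ofReal_abs, hTT,
          abs_of_nonneg (mul_nonneg (tconv_nonneg d hgm hgnn x)
            (Real.rpow_nonneg hups.le _)),
          ENNReal.ofReal_mul (tconv_nonneg d hgm hgnn x),
          ← ENNReal.ofReal_rpow_of_pos hups]
        calc ENNReal.ofReal (Tconv d g x) * (ENNReal.ofReal (upsR d x)) ^ (-(1 / (d : ℝ)))
            ≤ M * cB * (ENNReal.ofReal (upsR d x)) ^ ((1 : ℝ) / d) *
                (ENNReal.ofReal (upsR d x)) ^ (-(1 / (d : ℝ))) :=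
              mul_le_mul_left (le_trans (ofReal_tconv_le d hgm hgnn x) (hTg x)) _
          _ = M * cB * ((ENNReal.ofReal (upsR d x)) ^ ((1 : ℝ) / d) *
                (ENNReal.ofReal (upsR d x)) ^ (-(1 / (d : ℝ)))) := mul_assoc _ _ _
          _ = cB * M := by
              rw [← ENNReal.rpow_add _ _ hofn0 hofnt, add_neg_cancel, ENNReal.rpow_zero,
                mul_one, mul_comm]
      calc eLpNormEssSup (fun x => Tconv d f x * upsR d x ^ (-(1 / (d : ℝ)))) volume
          ≤ cB * M := essSup_le_of_ae_le _ hbound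
        _ ≤ A' * cB * M := mul_le_mul_left (le_mul_of_one_le_left (by simp) hA'1) M
  · -- now `t < 1`
    have ht1'' : t < 1 := lt_of_le_of_ne ht1 ht1'
    by_cases ht0' : t = 0
    · -- the endpoint `t = 0`
      subst ht0'
      simp only [zero_div, neg_zero, Real.rpow_zero, mul_one]
      refine (hA2 f).trans (mul_le_mul_left ?_ _)
      exact le_mul_of_one_le_right (by simp) hcB1
    · -- the main case `0 < t < 1`
      have ht0'' : 0 < t := lt_of_le_of_ne ht0 (Ne.symm ht0')
      set s : ℝ := 1 - t with hs
      have hs0 : 0 < s := by rw [hs]; linarith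
      have hs1 : s ≤ 1 := by rw [hs]; linarith
      set qtr : ℝ := ((d : ℝ) + 1) / s with hqtr
      set ptr : ℝ := ((d : ℝ) + 1) / ((d : ℝ) * s) with hptr
      have hqtrpos : 0 < qtr := by positivity
      have hptrpos : 0 < ptr := by positivity
      have hqe : qexp d t = ENNReal.ofReal qtr := qexp_eq d ht1''
      have hpe : pexp d t = ENNReal.ofReal ptr := pexp_eq d hd ht1''
      set g : Pt d → ℝ := fun y => f y * upsStarR d y ^ (-t) with hgdef
      have hg_meas : Measurable g :=
        hfm.mul (((cont_upsStarR d).measurable).pow measurable_const)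
      have hg_nn : ∀ y, 0 ≤ g y := fun y =>
        mul_nonneg (hfnn y) (Real.rpow_nonneg (upsStarR_pos d y).le _)
      set h : Pt d → ℝ := fun y => g y ^ (1 / s) with hhdef
      have hh_meas : Measurable h := hg_meas.pow measurable_const
      have hh_nn : ∀ y, 0 ≤ h y := fun y => Real.rpow_nonneg (hg_nn y) _
      -- pointwise Hölder bound
      have hpoint : ∀ x, (‖Tconv d f x * upsR d x ^ (-(t / d))‖₊ : ℝ≥0∞) ≤
          cB ^ t * (Tlin d (fun y => ENNReal.ofReal (h y)) x) ^ s := by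
        intro x
        have hups := upsR_pos d x
        have hofn0 : ENNReal.ofReal (upsR d x) ≠ 0 := (ENNReal.ofReal_pos.2 hups).ne'
        have hofnt : ENNReal.ofReal (upsR d x) ≠ ⊤ := ENNReal.ofReal_ne_top
        rw [← enorm_eq_nnnorm, Real.enorm_eq_ofReal_abs,
          abs_of_nonneg (mul_nonneg (tconv_nonneg d hfm hfnn x)
            (Real.rpow_nonneg hups.le _)),
          ENNReal.ofReal_mul (tconv_nonneg d hfm hfnn x),
          ← ENNReal.ofReal_rpow_of_pos hups]
        set u : EuclideanSpace ℝ (Fin (d - 1)) → ℝ≥0∞ :=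
          fun τ => ENNReal.ofReal (g (x.1 - τ, x.2 - ‖τ‖ ^ 2)) with hu
        set v : EuclideanSpace ℝ (Fin (d - 1)) → ℝ≥0∞ :=
          fun τ => (ENNReal.ofReal (upsStarR d (x.1 - τ, x.2 - ‖τ‖ ^ 2))) ^ t with hv
        have hconj : Real.HolderConjugate (1 / s) (1 / t) := by
          rw [Real.holderConjugate_iff]; constructor
          · rw [lt_div_iff₀ hs0, one_mul]; linarith
          · rw [one_div, one_div, inv_inv, inv_inv, hs]; ring
        have hum : AEMeasurable u volume :=
          ((hg_meas.comp (meas_slice_fun d x)).ennreal_ofReal).aemeasurable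
        have hvm : AEMeasurable v volume :=
          (((((cont_upsStarR d).measurable).comp
            (meas_slice_fun d x)).ennreal_ofReal).pow measurable_const).aemeasurable
        have hH := ENNReal.lintegral_mul_le_Lp_mul_Lq volume hconj hum hvm
        have e0 : Tlin d (fun y => ENNReal.ofReal (f y)) x = ∫⁻ τ, (u * v) τ := by
          refine lintegral_congr fun τ => ?_
          rw [Pi.mul_apply, hu, hv]
          exact (mul_weight_cancel (hfnn _) (upsStarR_pos d _) t).symm
        have e1 : (∫⁻ τ, u τ ^ (1 / s)) = Tlin d (fun y => ENNReal.ofReal (h y)) x := by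
          refine lintegral_congr fun τ => ?_
          rw [hu, ENNReal.ofReal_rpow_of_nonneg (hg_nn _) (by positivity)]
        have e2 : (∫⁻ τ, v τ ^ (1 / t)) =
            Tlin d (fun y => ENNReal.ofReal (upsStarR d y)) x := by
          refine lintegral_congr fun τ => ?_
          rw [hv, ← ENNReal.rpow_mul, mul_one_div_cancel ht0''.ne', ENNReal.rpow_one]
        have hHolder : Tlin d (fun y => ENNReal.ofReal (f y)) x ≤
            (Tlin d (fun y => ENNReal.ofReal (h y)) x) ^ s *
              (Tlin d (fun y => ENNReal.ofReal (upsStarR d y)) x) ^ t := by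
          calc Tlin d (fun y => ENNReal.ofReal (f y)) x = ∫⁻ τ, (u * v) τ := e0
            _ ≤ (∫⁻ τ, u τ ^ (1 / s)) ^ (1 / (1 / s)) *
                (∫⁻ τ, v τ ^ (1 / t)) ^ (1 / (1 / t)) := hH
            _ = (Tlin d (fun y => ENNReal.ofReal (h y)) x) ^ s *
                (Tlin d (fun y => ENNReal.ofReal (upsStarR d y)) x) ^ t := by
                rw [e1, e2, one_div_one_div, one_div_one_div]
        calc ENNReal.ofReal (Tconv d f x) * (ENNReal.ofReal (upsR d x)) ^ (-(t / d))
            ≤ Tlin d (fun y => ENNReal.ofReal (f y)) x *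
                (ENNReal.ofReal (upsR d x)) ^ (-(t / d)) :=
              mul_le_mul_left (ofReal_tconv_le d hfm hfnn x) _
          _ ≤ ((Tlin d (fun y => ENNReal.ofReal (h y)) x) ^ s *
                (Tlin d (fun y => ENNReal.ofReal (upsStarR d y)) x) ^ t) *
                (ENNReal.ofReal (upsR d x)) ^ (-(t / d)) := mul_le_mul_left hHolder _
          _ ≤ ((Tlin d (fun y => ENNReal.ofReal (h y)) x) ^ s *
                (cB * (ENNReal.ofReal (upsR d x)) ^ ((1 : ℝ) / d)) ^ t) *
                (ENNReal.ofReal (upsR d x)) ^ (-(t / d)) :=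
              mul_le_mul_left (mul_le_mul_right (ENNReal.rpow_le_rpow (hpt' x) ht0) _) _
          _ = cB ^ t * (Tlin d (fun y => ENNReal.ofReal (h y)) x) ^ s *
                ((ENNReal.ofReal (upsR d x)) ^ (t / d) *
                  (ENNReal.ofReal (upsR d x)) ^ (-(t / d))) := by
              rw [ENNReal.mul_rpow_of_nonneg _ _ ht0, ← ENNReal.rpow_mul,
                show (1 / (d : ℝ)) * t = t / d by ring]
              ring
          _ = cB ^ t * (Tlin d (fun y => ENNReal.ofReal (h y)) x) ^ s := by
              rw [← ENNReal.rpow_add _ _ hofn0 hofnt, add_neg_cancel, ENNReal.rpow_zero,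
                mul_one]
      -- integrate the pointwise bound
      have hcBt_top : cB ^ t ≠ ⊤ := ENNReal.rpow_ne_top_of_nonneg ht0 hcBtop
      have hsq : s * qtr = (d : ℝ) + 1 := by
        rw [hqtr]; field_simp
      rw [hqe, hpe, eLp_ofReal volume _ hqtrpos, eLp_ofReal volume _ hptrpos]
      have lhs_le : (∫⁻ x, (ENNReal.ofReal |Tconv d f x * upsR d x ^ (-(t / d))|) ^ qtr) ^
          (1 / qtr) ≤ cB ^ t *
            ((∫⁻ x, (Tlin d (fun y => ENNReal.ofReal (h y)) x) ^ ((d : ℝ) + 1)) ^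
              (1 / ((d : ℝ) + 1))) ^ s := by
        calc (∫⁻ x, (ENNReal.ofReal |Tconv d f x * upsR d x ^ (-(t / d))|) ^ qtr) ^ (1 / qtr)
            ≤ (∫⁻ x, (cB ^ t * (Tlin d (fun y => ENNReal.ofReal (h y)) x) ^ s) ^ qtr) ^
              (1 / qtr) := by
              refine ENNReal.rpow_le_rpow (lintegral_mono fun x => ?_) (by positivity)
              refine ENNReal.rpow_le_rpow ?_ hqtrpos.le
              rw [← Real.enorm_eq_ofReal_abs]
              exact hpoint x
          _ = ((cB ^ t) ^ qtr * ∫⁻ x,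
                (Tlin d (fun y => ENNReal.ofReal (h y)) x) ^ (s * qtr)) ^ (1 / qtr) := by
              congr 1
              rw [← lintegral_const_mul' _ _ (ENNReal.rpow_ne_top_of_nonneg hqtrpos.le hcBt_top)]
              refine lintegral_congr fun x => ?_
              rw [ENNReal.mul_rpow_of_nonneg _ _ hqtrpos.le, ← ENNReal.rpow_mul,
                ← ENNReal.rpow_mul]
          _ = cB ^ t * (∫⁻ x,
                (Tlin d (fun y => ENNReal.ofReal (h y)) x) ^ (s * qtr)) ^ (1 / qtr) := by
              rw [ENNReal.mul_rpow_of_nonneg _ _ (by positivity : (0:ℝ) ≤ 1 / qtr),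
                ← ENNReal.rpow_mul, mul_one_div_cancel hqtrpos.ne', ENNReal.rpow_one]
          _ = cB ^ t * ((∫⁻ x, (Tlin d (fun y => ENNReal.ofReal (h y)) x) ^ ((d : ℝ) + 1)) ^
                (1 / ((d : ℝ) + 1))) ^ s := by
              rw [hsq, ← ENNReal.rpow_mul,
                show (1 / ((d : ℝ) + 1)) * s = 1 / qtr by rw [hqtr, one_div_div]; ring]
      refine le_trans lhs_le ?_
      -- apply the strong unweighted bound
      have hlemA := lemA d hd A' hA2 hh_meas hh_nn
      have hstep : ((∫⁻ x, (Tlin d (fun y => ENNReal.ofReal (h y)) x) ^ ((d : ℝ) + 1)) ^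
          (1 / ((d : ℝ) + 1))) ^ s ≤
            (A' * (∫⁻ x, (ENNReal.ofReal (h x)) ^ (((d : ℝ) + 1) / d)) ^
              ((d : ℝ) / ((d : ℝ) + 1))) ^ s :=
        ENNReal.rpow_le_rpow hlemA hs0.le
      -- identify the RHS integral
      have hid : ∀ x : Pt d, (ENNReal.ofReal (h x)) ^ (((d : ℝ) + 1) / d) =
          (ENNReal.ofReal (g x)) ^ ptr := by
        intro x
        rw [hhdef, ← ENNReal.ofReal_rpow_of_nonneg (hg_nn x) (by positivity),
          ← ENNReal.rpow_mul,
          show (1 / s) * (((d : ℝ) + 1) / d) = ptr by rw [hptr, div_mul_div_comm, one_mul, mul_comm s (d : ℝ)]]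
      have habs : ∀ x : Pt d, ENNReal.ofReal |f x * upsStarR d x ^ (-t)| =
          ENNReal.ofReal (g x) := fun x => by rw [hgdef, abs_of_nonneg (hg_nn x)]
      calc cB ^ t * ((∫⁻ x, (Tlin d (fun y => ENNReal.ofReal (h y)) x) ^ ((d : ℝ) + 1)) ^
            (1 / ((d : ℝ) + 1))) ^ s
          ≤ cB ^ t * (A' * (∫⁻ x, (ENNReal.ofReal (h x)) ^ (((d : ℝ) + 1) / d)) ^
              ((d : ℝ) / ((d : ℝ) + 1))) ^ s := mul_le_mul_right hstep _
        _ = cB ^ t * (A' ^ s * ((∫⁻ x, (ENNReal.ofReal (g x)) ^ ptr) ^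
              ((d : ℝ) / ((d : ℝ) + 1))) ^ s) := by
            rw [show (∫⁻ x, (ENNReal.ofReal (h x)) ^ (((d : ℝ) + 1) / d)) =
                ∫⁻ x, (ENNReal.ofReal (g x)) ^ ptr from lintegral_congr fun x => hid x,
              ENNReal.mul_rpow_of_nonneg _ _ hs0.le]
        _ = cB ^ t * A' ^ s * (∫⁻ x, (ENNReal.ofReal (g x)) ^ ptr) ^ (1 / ptr) := by
            rw [← ENNReal.rpow_mul,
              show ((d : ℝ) / ((d : ℝ) + 1)) * s = 1 / ptr by rw [hptr, one_div_div]; ring]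
            ring
        _ ≤ cB * A' * (∫⁻ x, (ENNReal.ofReal (g x)) ^ ptr) ^ (1 / ptr) := by
            refine mul_le_mul_left (mul_le_mul' ?_ ?_) _
            · calc cB ^ t ≤ cB ^ (1 : ℝ) := ENNReal.rpow_le_rpow_of_exponent_le hcB1 ht1
                _ = cB := ENNReal.rpow_one cB
            · calc A' ^ s ≤ A' ^ (1 : ℝ) := ENNReal.rpow_le_rpow_of_exponent_le hA'1 hs1
                _ = A' := ENNReal.rpow_one A'
        _ = A' * cB * (∫⁻ x, (ENNReal.ofReal |f x * upsStarR d x ^ (-t)|) ^ ptr) ^ (1 / ptr) := by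
            rw [mul_comm cB A']
            congr 2
            exact (lintegral_congr fun x => by rw [habs x]).symm

end Main
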